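/- In a prime graph G, any two distinct proper t-convex sets share at most one vertex. -/

import Mathlib

open Set

variable {V : Type*}

/-- `p` is a triangle path: a path with no edge joining vertices at index
distance greater than 2 along the path. -/
def TPath (G : SimpleGraph V) {u v : V} (p : G.Walk u v) : Prop :=
  p.IsPath ∧ ∀ i j : ℕ, i + 2 < j →
    ∀ (hi : i < p.support.length) (hj : j < p.support.length),
      ¬ G.Adj (p.support.get ⟨i, hi⟩) (p.support.get ⟨j, hj⟩)

/-- `p` is a monophonic (induced) path: a path with no edge joining vertices at
index distance greater than 1 along the path. -/
def MPath (G : SimpleGraph V) {u v : V} (p : G.Walk u v) : Prop :=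
  p.IsPath ∧ ∀ i j : ℕ, i + 1 < j →
    ∀ (hi : i < p.support.length) (hj : j < p.support.length),
      ¬ G.Adj (p.support.get ⟨i, hi⟩) (p.support.get ⟨j, hj⟩)

/-- `p` is a geodesic (shortest path). -/
def GPath (G : SimpleGraph V) {u v : V} (p : G.Walk u v) : Prop :=
  p.IsPath ∧ ∀ q : G.Walk u v, p.length ≤ q.length

/-- `S` is convex in the triangle path convexity. -/
def TConvex (G : SimpleGraph V) (S : Set V) : Prop :=
  ∀ ⦃u v : V⦄, u ∈ S → v ∈ S → ∀ p : G.Walk u v, TPath G p → ∀ w ∈ p.support, w ∈ S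

/-- `S` is convex in the monophonic convexity. -/
def MConvex (G : SimpleGraph V) (S : Set V) : Prop :=
  ∀ ⦃u v : V⦄, u ∈ S → v ∈ S → ∀ p : G.Walk u v, MPath G p → ∀ w ∈ p.support, w ∈ S

/-- `S` is convex in the geodetic convexity. -/
def GConvex (G : SimpleGraph V) (S : Set V) : Prop :=
  ∀ ⦃u v : V⦄, u ∈ S → v ∈ S → ∀ p : G.Walk u v, GPath G p → ∀ w ∈ p.support, w ∈ S

/-- `S` is `P₃`-convex: no vertex outside `S` has two neighbours in `S`. -/
def P3Convex (G : SimpleGraph V) (S : Set V) : Prop :=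
  ∀ w ∉ S, ∀ a ∈ S, ∀ b ∈ S, G.Adj w a → G.Adj w b → a = b

/-- The triangle path interval of `S`. -/
def TInterval (G : SimpleGraph V) (S : Set V) : Set V :=
  S ∪ {w | ∃ u ∈ S, ∃ v ∈ S, ∃ p : G.Walk u v, TPath G p ∧ w ∈ p.support}

/-- The monophonic interval of `S`. -/
def MInterval (G : SimpleGraph V) (S : Set V) : Set V :=
  S ∪ {w | ∃ u ∈ S, ∃ v ∈ S, ∃ p : G.Walk u v, MPath G p ∧ w ∈ p.support}

/-- The geodetic interval of `S`. -/
def GInterval (G : SimpleGraph V) (S : Set V) : Set V :=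
  S ∪ {w | ∃ u ∈ S, ∃ v ∈ S, ∃ p : G.Walk u v, GPath G p ∧ w ∈ p.support}

/-- The `P₃`-interval of `S`: `S` together with the vertices having at least two
neighbours in `S`. -/
def P3Interval (G : SimpleGraph V) (S : Set V) : Set V :=
  S ∪ {w | w ∉ S ∧ ∃ a ∈ S, ∃ b ∈ S, a ≠ b ∧ G.Adj w a ∧ G.Adj w b}

/-- The convex hull of `S` in the triangle path convexity. -/
def THull (G : SimpleGraph V) (S : Set V) : Set V :=
  ⋂₀ {C : Set V | S ⊆ C ∧ TConvex G C}

/-- The convex hull of `S` in the monophonic convexity. -/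
def MHull (G : SimpleGraph V) (S : Set V) : Set V :=
  ⋂₀ {C : Set V | S ⊆ C ∧ MConvex G C}

/-- The convex hull of `S` in the geodetic convexity. -/
def GHull (G : SimpleGraph V) (S : Set V) : Set V :=
  ⋂₀ {C : Set V | S ⊆ C ∧ GConvex G C}

/-- `K` separates the vertices `a` and `b`: both lie outside `K` and every walk
between them meets `K`. -/
def Separates (G : SimpleGraph V) (K : Set V) (a b : V) : Prop :=
  a ∉ K ∧ b ∉ K ∧ ∀ p : G.Walk a b, ∃ w ∈ p.support, w ∈ K

/-- `K` is a separator of `G`. -/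
def IsSeparator (G : SimpleGraph V) (K : Set V) : Prop :=
  ∃ a b : V, Separates G K a b

/-- `G` is prime: it has no clique separator. -/
def IsPrime (G : SimpleGraph V) : Prop :=
  ¬ ∃ C : Set V, G.IsClique C ∧ IsSeparator G C

/-- `K` is a minimal separator for `a` and `b`. -/
def IsMinSeparator (G : SimpleGraph V) (K : Set V) (a b : V) : Prop :=
  Separates G K a b ∧ ∀ K' : Set V, K' ⊂ K → ¬ Separates G K' a b

/-- `W` induces a maximal prime subgraph of `G`. -/
def IsMPSubgraph (G : SimpleGraph V) (W : Set V) : Prop :=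
  IsPrime (G.induce W) ∧ ∀ W' : Set V, W ⊆ W' → IsPrime (G.induce W') → W' = W

/-- `C` is the vertex set of a connected component of `G - S`. -/
def IsCompOf (G : SimpleGraph V) (S C : Set V) : Prop :=
  C.Nonempty ∧ C ∩ S = ∅ ∧
  (∀ x ∈ C, ∀ y ∈ C, ∃ p : G.Walk x y, ∀ w ∈ p.support, w ∈ C) ∧
  (∀ x ∈ C, ∀ y : V, y ∉ S → G.Adj x y → y ∈ C)


namespace SimpleGraph
namespace Walk

variable {V : Type*} {G : SimpleGraph V}

lemma support_get_eq_getVert {u v : V} (p : G.Walk u v) (i : ℕ)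
    (hi : i < p.support.length) : p.support.get ⟨i, hi⟩ = p.getVert i := by
  induction p generalizing i with
  | nil =>
    simp only [support_nil, List.length_singleton] at hi
    obtain rfl : i = 0 := by omega
    rfl
  | cons h q ih =>
    cases i with
    | zero => rfl
    | succ n =>
      simp only [support_cons, List.length_cons] at hi
      have hn : n < q.support.length := by omega
      show (_ :: q.support).get ⟨n+1, _⟩ = _
      simpa [List.get_cons_succ] using ih n hn

/-- take the first `n` steps of a walk -/
def wtake {u v : V} : (p : G.Walk u v) → (n : ℕ) → G.Walk u (p.getVert n)
  | _, 0 => Walk.nil.copy rfl (getVert_zero _).symm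
  | Walk.nil, _ + 1 => Walk.nil
  | Walk.cons h q, n + 1 => Walk.cons h (wtake q n)

lemma length_wtake {u v : V} : ∀ (p : G.Walk u v) (n : ℕ), n ≤ p.length →
    (p.wtake n).length = n := by
  intro p n
  induction p generalizing n with
  | nil => intro hn; simp only [Walk.length_nil, Nat.le_zero] at hn; subst hn; simp [wtake]
  | cons h q ih =>
    intro hn
    cases n with
    | zero => simp [wtake]
    | succ m =>
      simp only [length_cons] at hn
      simp [wtake, ih m (by omega)]

lemma support_wtake_subset {u v : V} : ∀ (p : G.Walk u v) (n : ℕ),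
    (p.wtake n).support ⊆ p.support := by
  intro p n
  induction p generalizing n with
  | nil => cases n <;> simp [wtake]
  | cons h q ih =>
    cases n with
    | zero => simp [wtake]
    | succ m =>
      simp only [wtake, support_cons, List.cons_subset, List.mem_cons, true_or, true_and]
      intro x hx
      have hx' : x ∈ _ :: (q.wtake m).support := hx
      rcases List.mem_cons.mp hx' with rfl | hx'
      · simp
      · exact List.mem_cons_of_mem _ (ih m hx')

/-- drop the first `n` steps of a walk -/
def wdrop {u v : V} : (p : G.Walk u v) → (n : ℕ) → G.Walk (p.getVert n) v
  | p, 0 => p.copy (getVert_zero p).symm rfl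
  | Walk.nil, _ + 1 => Walk.nil
  | Walk.cons _ q, n + 1 => wdrop q n

lemma length_wdrop {u v : V} : ∀ (p : G.Walk u v) (n : ℕ), n ≤ p.length →
    (p.wdrop n).length = p.length - n := by
  intro p n
  induction p generalizing n with
  | nil => intro hn; simp only [Walk.length_nil, Nat.le_zero] at hn; subst hn; simp [wdrop]
  | cons h q ih =>
    intro hn
    cases n with
    | zero => simp [wdrop]
    | succ m =>
      simp only [length_cons] at hn ⊢
      simpa [wdrop] using ih m (by omega)

lemma support_wdrop_subset {u v : V} : ∀ (p : G.Walk u v) (n : ℕ),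
    (p.wdrop n).support ⊆ p.support := by
  intro p n
  induction p generalizing n with
  | nil => cases n <;> simp [wdrop] <;> rfl
  | cons h q ih =>
    cases n with
    | zero => simp [wdrop]
    | succ m =>
      simp only [wdrop, support_cons]
      exact fun x hx => List.mem_cons_of_mem _ (ih m hx)

end Walk
end SimpleGraph

section AuxProof

variable {G : SimpleGraph V}

open SimpleGraph Walk in
private lemma tconvex_key {S : Set V} (hS : TConvex G S) :
    ∀ n : ℕ, ∀ {x y : V}, x ∈ S → y ∈ S → ∀ p : G.Walk x y, p.length ≤ n →
      (∀ w ∈ p.support, w = x ∨ w = y ∨ w ∉ S) → x = y ∨ G.Adj x y := by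
  classical
  intro n
  induction n with
  | zero =>
    intro x y _ _ p hlen _
    exact Or.inl (Walk.eq_of_length_eq_zero (Nat.le_zero.mp hlen))
  | succ n ih =>
    intro x y hx hy p hlen hp
    have hqpath : p.bypass.IsPath := p.bypass_isPath
    have hqsub : p.bypass.support ⊆ p.support := p.support_bypass_subset
    have hqlen : p.bypass.length ≤ p.length := p.length_bypass_le
    set q := p.bypass with hqdef
    have hpq : ∀ w ∈ q.support, w = x ∨ w = y ∨ w ∉ S := fun w hw => hp w (hqsub hw)
    have hsl : q.support.length = q.length + 1 := q.length_support
    by_cases hT : TPath G q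
    · have hmem := hS hx hy q hT
      rcases hql : q.length with _ | _ | m
      · exact Or.inl (Walk.eq_of_length_eq_zero hql)
      · right
        have h01 := q.adj_getVert_succ (i := 0) (by omega)
        rw [Walk.getVert_zero] at h01
        have h1 : q.getVert 1 = y := q.getVert_of_length_le (le_of_eq hql)
        rwa [h1] at h01
      · exfalso
        have hz : q.getVert 1 ∈ q.support :=
          Walk.mem_support_iff_exists_getVert.mpr ⟨1, rfl, by omega⟩
        have hzS : q.getVert 1 ∈ S := hmem _ hz
        have hnd := hqpath.support_nodup
        have g0 : q.support.get ⟨0, by omega⟩ = x := by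
          rw [Walk.support_get_eq_getVert]; exact q.getVert_zero
        have g1 : q.support.get ⟨1, by omega⟩ = q.getVert 1 :=
          Walk.support_get_eq_getVert q 1 (by omega)
        have gl : q.support.get ⟨q.length, by omega⟩ = y := by
          rw [Walk.support_get_eq_getVert]; exact q.getVert_length
        rcases hpq _ hz with h | h | h
        · have : (⟨1, by omega⟩ : Fin q.support.length) = ⟨0, by omega⟩ :=
            hnd.get_inj_iff.mp (by rw [g0, g1, h])
          simpa using this
        · have : (⟨1, by omega⟩ : Fin q.support.length) = ⟨q.length, by omega⟩ :=
            hnd.get_inj_iff.mp (by rw [gl, g1, h])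
          have := Fin.mk.injEq .. ▸ this
          omega
        · exact h hzS
    · rw [TPath, not_and] at hT
      have hT' := hT hqpath
      push_neg at hT'
      obtain ⟨i, j, hij, hi, hj, hadj⟩ := hT'
      rw [Walk.support_get_eq_getVert, Walk.support_get_eq_getVert] at hadj
      have hjle : j ≤ q.length := by omega
      have hile : i ≤ q.length := by omega
      set r : G.Walk x y := (q.wtake i).append (Walk.cons hadj (q.wdrop j)) with hrdef
      have hrlen : r.length ≤ n := by
        rw [hrdef, Walk.length_append, Walk.length_cons,
          Walk.length_wtake q i hile, Walk.length_wdrop q j hjle]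
        omega
      have hrsub : r.support ⊆ q.support := by
        intro w hw
        rw [hrdef, Walk.mem_support_append_iff] at hw
        rcases hw with hw | hw
        · exact Walk.support_wtake_subset q i hw
        · rw [Walk.support_cons, List.mem_cons] at hw
          rcases hw with rfl | hw
          · exact Walk.mem_support_iff_exists_getVert.mpr ⟨i, rfl, hile⟩
          · exact Walk.support_wdrop_subset q j hw
      exact ih hx hy r hrlen fun w hw => hpq w (hrsub hw)

open SimpleGraph Walk in
private lemma tconvex_isClique (G : SimpleGraph V) (hprime : IsPrime G) {S : Set V}
    (hS : TConvex G S) (hS' : S ≠ Set.univ) : G.IsClique S := by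
  obtain ⟨c₀, hc₀⟩ := (Set.ne_univ_iff_exists_notMem S).mp hS'
  set C : Set V := {v | ∃ p : G.Walk c₀ v, ∀ w ∈ p.support, w ∉ S} with hCdef
  set N : Set V := {s | s ∈ S ∧ ∃ c ∈ C, G.Adj s c} with hNdef
  have hc₀C : c₀ ∈ C := ⟨Walk.nil, by simpa using hc₀⟩
  have hCS : ∀ v ∈ C, v ∉ S := by rintro v ⟨p, hp⟩; exact hp v p.end_mem_support
  have hclosed : ∀ u ∈ C, ∀ b, b ∉ S → G.Adj u b → b ∈ C := by
    rintro u ⟨p, hp⟩ b hbS hadj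
    refine ⟨p.concat hadj, ?_⟩
    intro w hw
    rw [Walk.support_concat, List.mem_append] at hw
    rcases hw with hw | hw
    · exact hp w hw
    · simp only [List.mem_singleton] at hw; subst hw; exact hbS
  have hNclique : G.IsClique N := by
    intro x hx y hy hxy
    obtain ⟨hxS, c₁, hc₁, hadj₁⟩ := hx
    obtain ⟨hyS, c₂, hc₂, hadj₂⟩ := hy
    obtain ⟨p₁, hp₁⟩ := hc₁
    obtain ⟨p₂, hp₂⟩ := hc₂
    set r : G.Walk x y := Walk.cons hadj₁ ((p₁.reverse.append p₂).concat hadj₂.symm) with hrdef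
    have hr : ∀ w ∈ r.support, w = x ∨ w = y ∨ w ∉ S := by
      intro w hw
      rw [hrdef, Walk.support_cons, List.mem_cons] at hw
      rcases hw with rfl | hw
      · exact Or.inl rfl
      rw [Walk.support_concat, List.mem_append] at hw
      rcases hw with hw | hw
      · rw [Walk.mem_support_append_iff] at hw
        refine Or.inr (Or.inr ?_)
        rcases hw with hw | hw
        · rw [Walk.support_reverse, List.mem_reverse] at hw
          exact hp₁ w hw
        · exact hp₂ w hw
      · simp only [List.mem_singleton] at hw; subst hw; exact Or.inr (Or.inl rfl)
    rcases tconvex_key hS r.length hxS hyS r le_rfl hr with h | h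
    · exact absurd h hxy
    · exact h
  have hmeets : ∀ {u v : V} (p : G.Walk u v), u ∈ C → v ∉ C → ∃ w ∈ p.support, w ∈ N := by
    intro u v p
    induction p with
    | nil => intro hu hv; exact absurd hu hv
    | @cons u b v h q ih =>
      intro hu hv
      by_cases hbS : b ∈ S
      · exact ⟨b, by simp [Walk.support_cons, q.start_mem_support], hbS, u, hu, h.symm⟩
      · obtain ⟨w, hw, hwN⟩ := ih (hclosed u hu b hbS h) hv
        exact ⟨w, by simp [Walk.support_cons, hw], hwN⟩
  have hcover : ∀ z : V, z ∈ C ∨ z ∈ N := by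
    intro z
    by_contra hz
    push_neg at hz
    exact hprime ⟨N, hNclique, c₀, z, fun h => hc₀ h.1, hz.2,
      fun p => hmeets p hc₀C hz.1⟩
  intro x hxS y hyS hxy
  exact hNclique ((hcover x).resolve_left fun h => hCS x h hxS)
    ((hcover y).resolve_left fun h => hCS y h hyS) hxy

end AuxProof

theorem stmt_8 [Fintype V] (G : SimpleGraph V) (hconn : G.Connected)
    (hprime : IsPrime G) (S₁ S₂ : Set V)
    (h₁ : TConvex G S₁) (h₁' : S₁ ≠ Set.univ)
    (h₂ : TConvex G S₂) (h₂' : S₂ ≠ Set.univ)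
    (hne : S₁ ≠ S₂) :
    (S₁ ∩ S₂).Subsingleton := by
  intro a ha b hb
  by_contra hab
  have hc₁ := tconvex_isClique G hprime h₁ h₁'
  have hc₂ := tconvex_isClique G hprime h₂ h₂'
  have key : ∀ (S T : Set V), TConvex G S → G.IsClique T →
      a ∈ S → a ∈ T → b ∈ S → b ∈ T → ∀ x ∈ T, x ∉ S → False := by
    intro S T hS hT haS haT hbS hbT x hxT hxS
    have hxa : x ≠ a := fun h => hxS (h ▸ haS)
    have hxb : x ≠ b := fun h => hxS (h ▸ hbS)
    have hax : G.Adj a x := hT haT hxT (Ne.symm hxa)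
    have hxb' : G.Adj x b := hT hxT hbT hxb
    set p : G.Walk a b :=
      SimpleGraph.Walk.cons hax (SimpleGraph.Walk.cons hxb' SimpleGraph.Walk.nil) with hpdef
    have hsupp : p.support = [a, x, b] := rfl
    have hTP : TPath G p := by
      constructor
      · rw [SimpleGraph.Walk.isPath_def, hsupp]
        simp only [List.nodup_cons, List.mem_cons, List.mem_singleton, List.not_mem_nil,
          List.nodup_nil]
        refine ⟨?_, ?_, not_false, trivial⟩ <;> tauto
      · intro i j hij hi hj
        rw [hsupp] at hj
        simp only [List.length_cons, List.length_nil] at hj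
        omega
    exact hxS (hS haS hbS p hTP x (by rw [hsupp]; simp))
  have hne' : ¬ ∀ z, z ∈ S₁ ↔ z ∈ S₂ := fun h => hne (Set.ext h)
  push_neg at hne'
  obtain ⟨x, ⟨hx1, hx2⟩ | ⟨hx1, hx2⟩⟩ := hne'
  · exact key S₂ S₁ h₂ hc₁ ha.2 ha.1 hb.2 hb.1 x hx1 hx2
  · exact key S₁ S₂ h₁ hc₂ ha.1 ha.2 hb.1 hb.2 x hx2 hx1
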